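/- Let n ≥ 1, let A_n be the matrix indexed by functions Fin n → Fin d × (Fin d × Fin d) with entries A_n[x,y] = ∏_t A[x t, y t] (the n-fold tensor power of A), and let C_n be the matrix on the same index type with entries C_n[x,y] = ∏_t (I_d ⊗ₖ (I − Φ))[x t, y t]. Then A_n is positive semidefinite and A_n − (d/(d+1))^n • C_n is positive semidefinite. -/

import Mathlib

open Matrix Kronecker ComplexOrder


/-- Projector onto the maximally entangled state: Φ[(i,j),(k,l)] = 1/d if i=j and k=l. -/
noncomputable def Phi (d : ℕ) : Matrix (Fin d × Fin d) (Fin d × Fin d) ℂ :=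
  fun p q => if p.1 = p.2 ∧ q.1 = q.2 then ((d : ℂ))⁻¹ else 0

/-- Coefficients a i k: 1 on the diagonal, -1/(d²-1) off the diagonal. -/
noncomputable def aCoef (d : ℕ) (i k : Fin d) : ℝ :=
  if i = k then 1 else -1 / ((d : ℝ) ^ 2 - 1)

/-- The matrix A = Σ_{i,k} E_{ik} ⊗ₖ (a i k • (I − Φ) + Φ). -/
noncomputable def Amat (d : ℕ) : Matrix (Fin d × (Fin d × Fin d)) (Fin d × (Fin d × Fin d)) ℂ :=
  ∑ i : Fin d, ∑ k : Fin d,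
    (Matrix.single i k (1 : ℂ)) ⊗ₖ
      (aCoef d i k • ((1 : Matrix (Fin d × Fin d) (Fin d × Fin d) ℂ) - Phi d) + Phi d)

/-- The n-fold tensor (Kronecker) power of A. -/
noncomputable def AmatPow (d n : ℕ) :
    Matrix (Fin n → Fin d × (Fin d × Fin d)) (Fin n → Fin d × (Fin d × Fin d)) ℂ :=
  fun x y => ∏ t : Fin n, Amat d (x t) (y t)

/-- The n-fold tensor power of I_d ⊗ₖ (I − Φ). -/
noncomputable def Cmat (d n : ℕ) :
    Matrix (Fin n → Fin d × (Fin d × Fin d)) (Fin n → Fin d × (Fin d × Fin d)) ℂ :=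
  fun x y => ∏ t : Fin n,
    ((1 : Matrix (Fin d) (Fin d) ℂ) ⊗ₖ
      ((1 : Matrix (Fin d × Fin d) (Fin d × Fin d) ℂ) - Phi d)) (x t) (y t)

-- general helper lemmas
section helpers
set_option linter.unusedSectionVars false
variable {ι κ β : Type*} [Fintype ι] [DecidableEq ι] [Fintype κ] [DecidableEq κ]

lemma smul_psd {M : Matrix ι ι ℂ} (hM : M.PosSemidef) {c : ℂ} (hc : 0 ≤ c) :
    (c • M).PosSemidef := by
  have hcs : star c = c := by
    rw [Complex.star_def, Complex.conj_eq_iff_im]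
    exact ((Complex.nonneg_iff).mp hc).2.symm ▸ rfl
  constructor
  · unfold Matrix.IsHermitian
    rw [Matrix.conjTranspose_smul, hM.1, hcs]
  · exact (hM.smul hc).2

lemma proj_psd {P : Matrix ι ι ℂ} (h1 : Pᴴ = P) (h2 : P * P = P) : P.PosSemidef := by
  have h : P = Pᴴ * P := by rw [h1, h2]
  rw [h]
  exact Matrix.posSemidef_conjTranspose_mul_self P

open scoped MatrixOrder in
lemma posSemidef_iff_eq_transpose_mul_self' {A : Matrix ι ι ℂ} :
    A.PosSemidef ↔ ∃ B : Matrix ι ι ℂ, A = Bᴴ * B := by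
  constructor
  · intro hA
    obtain ⟨B, rfl⟩ := CStarAlgebra.nonneg_iff_eq_star_mul_self.mp hA.nonneg
    exact ⟨B, rfl⟩
  · rintro ⟨B, rfl⟩
    exact Matrix.posSemidef_conjTranspose_mul_self B

lemma kron_psd {X : Matrix κ κ ℂ} {Y : Matrix ι ι ℂ}
    (hX : X.PosSemidef) (hY : Y.PosSemidef) : (X ⊗ₖ Y).PosSemidef := by
  obtain ⟨B, rfl⟩ := posSemidef_iff_eq_transpose_mul_self'.mp hX
  obtain ⟨C, rfl⟩ := posSemidef_iff_eq_transpose_mul_self'.mp hY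
  have h : (Bᴴ * B) ⊗ₖ (Cᴴ * C) = (B ⊗ₖ C)ᴴ * (B ⊗ₖ C) := by
    rw [Matrix.mul_kronecker_mul]
    congr 1
    ext ⟨a, b⟩ ⟨c, e⟩
    simp [Matrix.conjTranspose_apply]
  rw [h]
  exact Matrix.posSemidef_conjTranspose_mul_self _

lemma psd_sum (s : Finset β) (f : β → Matrix ι ι ℂ)
    (h : ∀ b ∈ s, (f b).PosSemidef) : (∑ b ∈ s, f b).PosSemidef :=
  Finset.sum_induction f Matrix.PosSemidef (fun _ _ ha hb => ha.add hb) .zero h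

lemma mixedTensor_psd {n : ℕ} (M : Fin n → Matrix ι ι ℂ) (h : ∀ t, (M t).PosSemidef) :
    Matrix.PosSemidef ((fun x y => ∏ t, M t (x t) (y t)) :
      Matrix (Fin n → ι) (Fin n → ι) ℂ) := by
  choose B hB using fun t => posSemidef_iff_eq_transpose_mul_self'.mp (h t)
  have key : ((fun x y => ∏ t, M t (x t) (y t)) : Matrix (Fin n → ι) (Fin n → ι) ℂ) =
      (Matrix.of fun g x : Fin n → ι => ∏ t, B t (g t) (x t))ᴴ *
      (Matrix.of fun g x : Fin n → ι => ∏ t, B t (g t) (x t)) := by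
    ext x y
    have h1 : ∀ t : Fin n, M t (x t) (y t) = ∑ z : ι, star (B t z (x t)) * B t z (y t) := by
      intro t
      rw [hB t]
      simp [Matrix.mul_apply, Matrix.conjTranspose_apply]
    calc ∏ t, M t (x t) (y t)
        = ∏ t, ∑ z : ι, star (B t z (x t)) * B t z (y t) :=
          Finset.prod_congr rfl fun t _ => h1 t
      _ = ∑ g : Fin n → ι, ∏ t, star (B t (g t) (x t)) * B t (g t) (y t) :=
          Fintype.prod_sum _
      _ = ∑ g : Fin n → ι, star (∏ t, B t (g t) (x t)) * ∏ t, B t (g t) (y t) := by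
          refine Finset.sum_congr rfl fun g _ => ?_
          rw [star_prod, Finset.prod_mul_distrib]
      _ = _ := by
          simp [Matrix.mul_apply, Matrix.conjTranspose_apply]
  rw [key]
  exact Matrix.posSemidef_conjTranspose_mul_self _

end helpers

noncomputable def Qm (d : ℕ) : Matrix (Fin d × Fin d) (Fin d × Fin d) ℂ := 1 - Phi d

def Jm (d : ℕ) : Matrix (Fin d) (Fin d) ℂ := Matrix.of fun _ _ => 1

section site
variable {d : ℕ} (hd : 2 ≤ d)
include hd

lemma dne : ((d : ℂ)) ≠ 0 := by
  have : d ≠ 0 := by omega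
  exact_mod_cast this

lemma phi_herm : (Phi d)ᴴ = Phi d := by
  ext p q
  simp only [Matrix.conjTranspose_apply, Phi, and_comm]
  split <;> simp

lemma phi_mul_phi : Phi d * Phi d = Phi d := by
  have hd0 : ((d : ℂ)) ≠ 0 := dne hd
  ext p q
  by_cases hp : p.1 = p.2 <;> by_cases hq : q.1 = q.2
  · simp only [Matrix.mul_apply, Phi]
    rw [if_pos ⟨hp, hq⟩]
    have h1 : ∀ x : Fin d × Fin d,
        ((if p.1 = p.2 ∧ x.1 = x.2 then (d : ℂ)⁻¹ else 0) *
          if x.1 = x.2 ∧ q.1 = q.2 then (d : ℂ)⁻¹ else 0)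
          = if x.1 = x.2 then (d : ℂ)⁻¹ * (d : ℂ)⁻¹ else 0 := by
      intro x; by_cases hx : x.1 = x.2 <;> simp [hx, hp, hq]
    rw [Finset.sum_congr rfl fun x _ => h1 x, Fintype.sum_prod_type]
    simp only [Finset.sum_ite_eq, Finset.mem_univ, if_true, Finset.sum_const,
      Finset.card_univ, Fintype.card_fin, nsmul_eq_mul]
    field_simp
  · simp [Matrix.mul_apply, Phi, hp, hq]
  · simp [Matrix.mul_apply, Phi, hp, hq]
  · simp [Matrix.mul_apply, Phi, hp, hq]

lemma phi_psd : (Phi d).PosSemidef := proj_psd (phi_herm hd) (phi_mul_phi hd)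

lemma qm_herm : (Qm d)ᴴ = Qm d := by
  unfold Qm
  rw [Matrix.conjTranspose_sub, Matrix.conjTranspose_one, phi_herm hd]

lemma qm_psd : (Qm d).PosSemidef := by
  refine proj_psd (qm_herm hd) ?_
  unfold Qm
  rw [sub_mul, one_mul, mul_sub, mul_one, phi_mul_phi hd, sub_self, sub_zero]

lemma jm_psd : (Jm d).PosSemidef := by
  have h : Jm d = (Matrix.of fun (_ : Fin 1) (_ : Fin d) => (1 : ℂ))ᴴ *
      (Matrix.of fun (_ : Fin 1) (_ : Fin d) => (1 : ℂ)) := by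
    ext i j
    simp [Jm, Matrix.mul_apply, Matrix.conjTranspose_apply]
  rw [h]
  exact Matrix.posSemidef_conjTranspose_mul_self _

lemma jm_mul_jm : Jm d * Jm d = (d : ℂ) • Jm d := by
  ext i j
  simp [Jm, Matrix.mul_apply]

lemma dI_sub_J_psd : ((d : ℂ) • (1 : Matrix (Fin d) (Fin d) ℂ) - Jm d).PosSemidef := by
  have hd0 : ((d : ℂ)) ≠ 0 := dne hd
  have hP : ((1 : Matrix (Fin d) (Fin d) ℂ) - (d : ℂ)⁻¹ • Jm d).PosSemidef := by
    refine proj_psd ?_ ?_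
    · have hJ : (Jm d)ᴴ = Jm d := by ext i j; simp [Jm, Matrix.conjTranspose_apply]
      rw [Matrix.conjTranspose_sub, Matrix.conjTranspose_one, Matrix.conjTranspose_smul, hJ]
      congr 1
      simp
    · rw [sub_mul, one_mul, mul_sub, mul_one, Matrix.smul_mul, Matrix.mul_smul,
        jm_mul_jm hd]
      match_scalars <;> field_simp <;> ring
  have h2 : ((d : ℂ) • (1 : Matrix (Fin d) (Fin d) ℂ) - Jm d) =
      (d : ℂ) • ((1 : Matrix (Fin d) (Fin d) ℂ) - (d : ℂ)⁻¹ • Jm d) := by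
    rw [smul_sub, smul_smul, mul_inv_cancel₀ hd0, one_smul]
  rw [h2]
  exact smul_psd hP (by exact_mod_cast Nat.zero_le d)

end site

noncomputable def Mc (d : ℕ) : Matrix (Fin d) (Fin d) ℂ :=
  Matrix.of fun i k => ((aCoef d i k : ℝ) : ℂ)

noncomputable def cC (d : ℕ) : ℂ := (d : ℂ) / ((d : ℂ) + 1)

section site2
variable {d : ℕ} (hd : 2 ≤ d)
include hd

lemma cC_nonneg : 0 ≤ cC d := by
  have : cC d = (((d : ℝ) / ((d : ℝ) + 1) : ℝ) : ℂ) := by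
    unfold cC; push_cast; ring
  rw [this, Complex.zero_le_real]
  positivity

lemma Amat_eq : Amat d = Mc d ⊗ₖ Qm d + Jm d ⊗ₖ Phi d := by
  ext ⟨i, p⟩ ⟨k, q⟩
  simp only [Amat, Matrix.sum_apply, Matrix.kroneckerMap_apply, Matrix.add_apply,
    Matrix.single, Matrix.of_apply, Matrix.smul_apply, Mc, Jm, Qm]
  rw [Finset.sum_comm]
  rw [Finset.sum_eq_single k (fun b _ hb => by
        rw [Finset.sum_eq_zero]; intro a _; simp [hb]
      ) (by simp)]
  rw [Finset.sum_eq_single i (fun a _ ha => by simp [ha]) (by simp)]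
  simp [Complex.real_smul, mul_add]

lemma den_ne : ((d : ℂ) ^ 2 - 1) ≠ 0 := by
  have h2 : (2 : ℝ) ≤ (d : ℝ) := by exact_mod_cast hd
  have hr : ((d : ℝ) ^ 2 - 1) ≠ 0 := by nlinarith
  have : ((d : ℂ) ^ 2 - 1) = (((d : ℝ) ^ 2 - 1 : ℝ) : ℂ) := by push_cast; ring
  rw [this]
  exact_mod_cast hr

lemma dp1_ne : ((d : ℂ) + 1) ≠ 0 := by
  have hr : ((d : ℝ) + 1) ≠ 0 := by positivity
  have : ((d : ℂ) + 1) = (((d : ℝ) + 1 : ℝ) : ℂ) := by push_cast; ring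
  rw [this]
  exact_mod_cast hr

lemma Mc_sub_eq : Mc d - cC d • (1 : Matrix (Fin d) (Fin d) ℂ) =
    (((d : ℂ) ^ 2 - 1))⁻¹ • ((d : ℂ) • (1 : Matrix (Fin d) (Fin d) ℂ) - Jm d) := by
  have h1 := den_ne hd
  have h2 := dp1_ne hd
  ext i k
  by_cases h : i = k <;>
    simp [Mc, aCoef, h, Jm, cC, Matrix.one_apply, Complex.real_smul] <;>
    push_cast <;> field_simp <;> ring

end site2

section keys
variable {d : ℕ} (hd : 2 ≤ d)
include hd

lemma inv_den_nonneg : 0 ≤ (((d : ℂ) ^ 2 - 1))⁻¹ := by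
  have : (((d : ℂ) ^ 2 - 1))⁻¹ = (((((d : ℝ) ^ 2 - 1))⁻¹ : ℝ) : ℂ) := by push_cast; ring
  rw [this, Complex.zero_le_real]
  have h2 : (2 : ℝ) ≤ (d : ℝ) := by exact_mod_cast hd
  have : (0 : ℝ) ≤ (d : ℝ) ^ 2 - 1 := by nlinarith
  positivity

lemma Mc_psd : (Mc d).PosSemidef := by
  have h : Mc d = cC d • (1 : Matrix (Fin d) (Fin d) ℂ) +
      (Mc d - cC d • (1 : Matrix (Fin d) (Fin d) ℂ)) := by abel
  rw [h, Mc_sub_eq hd]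
  exact (smul_psd .one (cC_nonneg hd)).add
    (smul_psd (dI_sub_J_psd hd) (inv_den_nonneg hd))

lemma key1 : (Amat d).PosSemidef := by
  rw [Amat_eq hd]
  exact (kron_psd (Mc_psd hd) (qm_psd hd)).add (kron_psd (jm_psd hd) (phi_psd hd))

lemma key2 : (Amat d - cC d • ((1 : Matrix (Fin d) (Fin d) ℂ) ⊗ₖ Qm d)).PosSemidef := by
  rw [Amat_eq hd]
  have h : cC d • ((1 : Matrix (Fin d) (Fin d) ℂ) ⊗ₖ Qm d) =
      (cC d • (1 : Matrix (Fin d) (Fin d) ℂ)) ⊗ₖ Qm d :=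
    (Matrix.smul_kronecker _ _ _).symm
  rw [h]
  have h2 : Mc d ⊗ₖ Qm d + Jm d ⊗ₖ Phi d - (cC d • (1 : Matrix (Fin d) (Fin d) ℂ)) ⊗ₖ Qm d
      = (Mc d - cC d • (1 : Matrix (Fin d) (Fin d) ℂ)) ⊗ₖ Qm d + Jm d ⊗ₖ Phi d := by
    ext ⟨a, p⟩ ⟨b, q⟩
    simp only [Matrix.add_apply, Matrix.sub_apply, Matrix.kroneckerMap_apply]
    ring
  rw [h2, Mc_sub_eq hd]
  exact (kron_psd (smul_psd (dI_sub_J_psd hd) (inv_den_nonneg hd)) (qm_psd hd)).add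
    (kron_psd (jm_psd hd) (phi_psd hd))

lemma Y_psd : (cC d • ((1 : Matrix (Fin d) (Fin d) ℂ) ⊗ₖ Qm d)).PosSemidef :=
  smul_psd (kron_psd .one (qm_psd hd)) (cC_nonneg hd)

end keys

/-- A_n is PSD and dominates (d/(d+1))^n • C_n in the Loewner order. -/
theorem stmt_7 (d n : ℕ) (hd : 2 ≤ d) (hn : 1 ≤ n) :
    (AmatPow d n).PosSemidef ∧
      (AmatPow d n - (((d : ℝ) / ((d : ℝ) + 1)) ^ n) • Cmat d n).PosSemidef := by
  classical
  set D := Amat d - cC d • ((1 : Matrix (Fin d) (Fin d) ℂ) ⊗ₖ Qm d) with hD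
  set Y := cC d • ((1 : Matrix (Fin d) (Fin d) ℂ) ⊗ₖ Qm d) with hY
  have hDY : D + Y = Amat d := sub_add_cancel _ _
  have hDpsd : D.PosSemidef := key2 hd
  have hYpsd : Y.PosSemidef := Y_psd hd
  have hcast : (((d : ℝ) / ((d : ℝ) + 1) : ℝ) : ℂ) = cC d := by
    unfold cC; push_cast; ring
  constructor
  · have h := mixedTensor_psd (fun _ : Fin n => Amat d) (fun _ => key1 hd)
    unfold AmatPow
    exact h
  · set T : Finset (Fin n) → Matrix (Fin n → Fin d × (Fin d × Fin d))
        (Fin n → Fin d × (Fin d × Fin d)) ℂ := fun S =>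
      ((fun x y => ∏ t, (if t ∈ S then D else Y) (x t) (y t)) :
        Matrix (Fin n → Fin d × (Fin d × Fin d)) (Fin n → Fin d × (Fin d × Fin d)) ℂ)
      with hTdef
    have hT : ∀ S, (T S).PosSemidef := fun S =>
      mixedTensor_psd _ (fun t => by by_cases h : t ∈ S <;> simp [h, hDpsd, hYpsd])
    have hEq : AmatPow d n - (((d : ℝ) / ((d : ℝ) + 1)) ^ n) • Cmat d n
        = ∑ S ∈ Finset.univ.powerset.erase ∅, T S := by
      ext x y
      have hprod : ∀ S : Finset (Fin n),
          (∏ t ∈ S, D (x t) (y t)) * ∏ t ∈ Finset.univ \ S, Y (x t) (y t)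
            = T S x y := by
        intro S
        show _ = ∏ t, (if t ∈ S then D else Y) (x t) (y t)
        rw [← Finset.prod_sdiff (Finset.subset_univ S), mul_comm]
        congr 1
        · exact Finset.prod_congr rfl fun t ht => by
            simp [(Finset.mem_sdiff.mp ht).2]
        · exact Finset.prod_congr rfl fun t ht => by simp [ht]
      have hA : AmatPow d n x y = ∑ S ∈ Finset.univ.powerset, T S x y := by
        show ∏ t, Amat d (x t) (y t) = _
        calc ∏ t, Amat d (x t) (y t)
            = ∏ t, (D (x t) (y t) + Y (x t) (y t)) := by
              refine Finset.prod_congr rfl fun t _ => ?_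
              rw [← hDY]; simp [Matrix.add_apply]
          _ = ∑ S ∈ Finset.univ.powerset,
                (∏ t ∈ S, D (x t) (y t)) * ∏ t ∈ Finset.univ \ S, Y (x t) (y t) :=
              Finset.prod_add _ _ _
          _ = _ := Finset.sum_congr rfl fun S _ => hprod S
      have hC : ((((d : ℝ) / ((d : ℝ) + 1)) ^ n : ℝ)) • Cmat d n x y = T ∅ x y := by
        have h1 : T ∅ x y = ∏ t : Fin n, Y (x t) (y t) := by
          show (∏ t, (if t ∈ (∅ : Finset (Fin n)) then D else Y) (x t) (y t)) = _
          simp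
        have h2 : ∀ t : Fin n, Y (x t) (y t) =
            cC d * ((1 : Matrix (Fin d) (Fin d) ℂ) ⊗ₖ Qm d) (x t) (y t) := by
          intro t; rw [hY]; simp [Matrix.smul_apply]
        rw [h1, Finset.prod_congr rfl fun t _ => h2 t, Finset.prod_mul_distrib,
          Finset.prod_const, Finset.card_univ, Fintype.card_fin]
        have h3 : Cmat d n x y = ∏ t : Fin n,
            ((1 : Matrix (Fin d) (Fin d) ℂ) ⊗ₖ Qm d) (x t) (y t) := by
          unfold Cmat Qm; rfl
        rw [h3, Complex.real_smul]
        push_cast [hcast]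
        ring
      rw [Matrix.sub_apply, Matrix.smul_apply, Matrix.sum_apply, hA, hC]
      rw [← Finset.add_sum_erase _ (fun S => T S x y) (Finset.empty_mem_powerset _)]
      ring
    rw [hEq]
    exact psd_sum _ _ (fun S _ => hT S)
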